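/- arXiv:1003.2654 — 5 statements merged into one kernel-verified Lean document; each statement's English description precedes it below -/
import Mathlib

section
/- Let f₁,...,f_M : X → ℝ be functions with ‖f_j‖ ≤ 1 for all j, where ‖g‖² = (1/n)∑_{i=1}^n g(x_i)² for fixed design points x₁,...,x_n. For θ ∈ ℝ^M write f_θ = ∑_j θ_j f_j, |θ|₁ = ∑_j |θ_j|, and M(θ) = #{j : θ_j ≠ 0}. Then for any θ* ∈ ℝ^M \ {0}, any integer k ≥ 1, and any function f, there exists θ ∈ ℝ^M with |θ|₁ = |θ*|₁ and M(θ) ≤ k such that ‖f - f_θ‖² ≤ ‖f - f_{θ*}‖² + |θ*|₁² / min(k, M(θ*)). -/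
open Finset

lemma maurey_abs_mul_sign (x : ℝ) : |x| * Real.sign x = x := by
  rcases lt_trichotomy x 0 with h | h | h
  · rw [Real.sign_of_neg h, abs_of_neg h]; ring
  · simp [h]
  · rw [Real.sign_of_pos h, abs_of_pos h]; ring

lemma maurey_sign_sq_le (x : ℝ) : Real.sign x ^ 2 ≤ 1 := by
  rcases Real.sign_apply_eq x with h | h | h <;> rw [h] <;> norm_num

lemma maurey_exp_single {k M : ℕ} (p : Fin M → ℝ) (hp : ∑ j, p j = 1)
    (X : Fin M → ℝ) (t₀ : Fin k) :
    ∑ ω : Fin k → Fin M, (∏ t, p (ω t)) * X (ω t₀) = ∑ j, p j * X j := by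
  have h := Fintype.prod_sum (fun (t : Fin k) (j : Fin M) => p j * (if t = t₀ then X j else 1))
  have h1 : ∀ t : Fin k, (∑ j, p j * (if t = t₀ then X j else 1))
      = if t = t₀ then ∑ j, p j * X j else 1 := by
    intro t; by_cases ht : t = t₀ <;> simp [ht, hp]
  rw [Fintype.prod_congr _ _ h1, Finset.prod_ite_eq' univ t₀ (fun _ => ∑ j, p j * X j)] at h
  simp only [mem_univ, if_true] at h
  have h2 : ∀ ω : Fin k → Fin M,
      (∏ t, p (ω t)) * X (ω t₀)
        = ∏ t, (p (ω t) * if t = t₀ then X (ω t) else 1) := by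
    intro ω
    rw [Finset.prod_mul_distrib, Finset.prod_ite_eq' univ t₀ (fun t => X (ω t))]
    simp
  rw [Finset.sum_congr rfl (fun ω _ => h2 ω), ← h]

lemma maurey_exp_pair {k M : ℕ} (p : Fin M → ℝ) (hp : ∑ j, p j = 1)
    (X Y : Fin M → ℝ) (t₀ t₁ : Fin k) (hne : t₀ ≠ t₁) :
    ∑ ω : Fin k → Fin M, (∏ t, p (ω t)) * (X (ω t₀) * Y (ω t₁))
      = (∑ j, p j * X j) * (∑ j, p j * Y j) := by
  have h := Fintype.prod_sum (fun (t : Fin k) (j : Fin M) =>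
    p j * ((if t = t₀ then X j else 1) * (if t = t₁ then Y j else 1)))
  have h1 : ∀ t : Fin k, (∑ j, p j * ((if t = t₀ then X j else 1) * (if t = t₁ then Y j else 1)))
      = (if t = t₀ then ∑ j, p j * X j else 1) * (if t = t₁ then ∑ j, p j * Y j else 1) := by
    intro t
    by_cases h0 : t = t₀ <;> by_cases h1 : t = t₁
    · subst h0; exact absurd h1 hne
    · simp [h0, h1, hne]
    · subst h1; simp [h0, Ne.symm hne]
    · simp [h0, h1, hp]
  rw [Fintype.prod_congr _ _ h1, Finset.prod_mul_distrib,
    Finset.prod_ite_eq' univ t₀ (fun _ => ∑ j, p j * X j),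
    Finset.prod_ite_eq' univ t₁ (fun _ => ∑ j, p j * Y j)] at h
  simp only [mem_univ, if_true] at h
  have h2 : ∀ ω : Fin k → Fin M,
      (∏ t, p (ω t)) * (X (ω t₀) * Y (ω t₁))
        = ∏ t, (p (ω t) * ((if t = t₀ then X (ω t) else 1) * (if t = t₁ then Y (ω t) else 1))) := by
    intro ω
    rw [Finset.prod_mul_distrib, Finset.prod_mul_distrib,
      Finset.prod_ite_eq' univ t₀ (fun t => X (ω t)),
      Finset.prod_ite_eq' univ t₁ (fun t => Y (ω t))]
    simp [mul_assoc]
  rw [Finset.sum_congr rfl (fun ω _ => h2 ω), ← h]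

lemma maurey_exists_le_exp {α : Type*} [Fintype α] (w Q : α → ℝ)
    (hw : ∀ a, 0 ≤ w a) (hw1 : ∑ a, w a = 1) :
    ∃ a, w a ≠ 0 ∧ Q a ≤ ∑ a, w a * Q a := by
  by_contra h
  push_neg at h
  obtain ⟨a₀, -, ha₀⟩ := Finset.exists_ne_zero_of_sum_ne_zero (by rw [hw1]; norm_num :
    ∑ a : α, w a ≠ 0)
  have hlt : ∑ a : α, w a * (∑ b : α, w b * Q b) < ∑ a : α, w a * Q a := by
    apply Finset.sum_lt_sum
    · intro a _
      rcases eq_or_lt_of_le (hw a) with h0 | h0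
      · simp [← h0]
      · exact mul_le_mul_of_nonneg_left (le_of_lt (h a (ne_of_gt h0))) (le_of_lt h0)
    · exact ⟨a₀, mem_univ _, mul_lt_mul_of_pos_left (h a₀ ha₀) (lt_of_le_of_ne (hw a₀) (Ne.symm ha₀))⟩
  rw [← Finset.sum_mul, hw1, one_mul] at hlt
  exact lt_irrefl _ hlt
open Finset

lemma maurey_main {n M k : ℕ} (hk : 1 ≤ k)
    (F : Fin M → Fin n → ℝ)
    (hF : ∀ j, (1 / n : ℝ) * ∑ i, F j i ^ 2 ≤ 1)
    (f : Fin n → ℝ) (θs : Fin M → ℝ) (hθs : θs ≠ 0) :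
    ∃ θ : Fin M → ℝ,
      (∑ j, |θ j|) = (∑ j, |θs j|) ∧
      (Finset.univ.filter fun j => θ j ≠ 0).card ≤ k ∧
      (1 / n : ℝ) * ∑ i, (f i - ∑ j, θ j * F j i) ^ 2 ≤
        (1 / n : ℝ) * ∑ i, (f i - ∑ j, θs j * F j i) ^ 2 +
          (∑ j, |θs j|) ^ 2 / k := by
  classical
  have hk0 : (0:ℝ) < (k:ℝ) := by exact_mod_cast hk
  set S := ∑ j, |θs j| with hSdef
  have hS0 : 0 < S := by
    obtain ⟨j, hj⟩ : ∃ j, θs j ≠ 0 := by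
      by_contra h; push_neg at h; exact hθs (funext h)
    exact Finset.sum_pos' (fun j _ => abs_nonneg _) ⟨j, mem_univ _, abs_pos.mpr hj⟩
  set p : Fin M → ℝ := fun j => |θs j| / S with hpdef
  have hp0 : ∀ j, 0 ≤ p j := fun j => div_nonneg (abs_nonneg _) hS0.le
  have hp1 : ∑ j, p j = 1 := by
    rw [hpdef, ← Finset.sum_div]; exact div_self hS0.ne'
  have hSp : ∀ j, S * p j = |θs j| := by
    intro j; rw [hpdef]; field_simp
  set g : Fin M → Fin n → ℝ := fun j i => Real.sign (θs j) * F j i with hgdef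
  set fs : Fin n → ℝ := fun i => ∑ j, θs j * F j i with hfsdef
  have hgkey : ∀ i, ∑ j, (S * p j) * g j i = fs i := by
    intro i
    refine Finset.sum_congr rfl fun j _ => ?_
    rw [hSp j, hgdef]
    simp only []
    rw [← mul_assoc, maurey_abs_mul_sign]
  set w : (Fin k → Fin M) → ℝ := fun ω => ∏ t, p (ω t) with hwdef
  have hw0 : ∀ ω, 0 ≤ w ω := fun ω => Finset.prod_nonneg fun t _ => hp0 _
  have hw1 : ∑ ω, w ω = 1 := by
    have h := maurey_exp_single p hp1 (fun _ => (1:ℝ)) (⟨0, hk⟩ : Fin k)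
    simp only [mul_one] at h
    simp only [hwdef]
    rw [h, hp1]
  set A : Fin M → ℝ := fun j => (1/n : ℝ) * ∑ i, f i * g j i with hAdef
  set B : Fin M → Fin M → ℝ := fun j j' => (1/n : ℝ) * ∑ i, g j i * g j' i with hBdef
  set H : (Fin k → Fin M) → Fin n → ℝ := fun ω i => (S/(k:ℝ)) * ∑ t, g (ω t) i with hHdef
  set Q : (Fin k → Fin M) → ℝ := fun ω => (1/n : ℝ) * ∑ i, (f i - H ω i)^2 with hQdef
  set nf : ℝ := (1/n : ℝ) * ∑ i, f i ^ 2 with hnfdef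
  set Qs : ℝ := (1/n : ℝ) * ∑ i, (f i - fs i)^2 with hQsdef
  set μA : ℝ := ∑ j, p j * A j with hmuA
  set D : ℝ := ∑ j, p j * B j j with hDdef
  set u : Fin n → ℝ := fun i => ∑ j, p j * g j i with hudef
  set O : ℝ := (1/n : ℝ) * ∑ i, u i ^ 2 with hOdef
  clear_value S p g fs w A B H Q nf Qs μA D u O
  -- per-ω decomposition
  have hQd : ∀ ω, Q ω = nf - 2*(S/(k:ℝ)) * (∑ t, A (ω t))
      + (S/(k:ℝ))^2 * (∑ t, ∑ s, B (ω t) (ω s)) := by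
    intro ω
    have e1 : ∀ i, (f i - H ω i)^2 = f i^2 - 2*(S/(k:ℝ)) * (∑ t, f i * g (ω t) i)
        + (S/(k:ℝ))^2 * (∑ t, ∑ s, g (ω t) i * g (ω s) i) := by
      intro i
      have hG : (∑ t, g (ω t) i) * (∑ t, g (ω t) i) = ∑ t, ∑ s, g (ω t) i * g (ω s) i :=
        Finset.sum_mul_sum _ _ _ _
      have hfg : f i * (∑ t, g (ω t) i) = ∑ t, f i * g (ω t) i := Finset.mul_sum _ _ _
      simp only [hHdef]
      rw [← hG, ← hfg]
      ring
    have eA : ∑ t, A (ω t) = (1/n:ℝ) * ∑ i, ∑ t, f i * g (ω t) i := by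
      simp only [hAdef]
      rw [← Finset.mul_sum]
      congr 1
      exact Finset.sum_comm
    have eB : ∑ t, ∑ s, B (ω t) (ω s) = (1/n:ℝ) * ∑ i, ∑ t, ∑ s, g (ω t) i * g (ω s) i := by
      simp only [hBdef]
      have : ∀ t : Fin k, ∑ s, (1/n:ℝ) * ∑ i, g (ω t) i * g (ω s) i
          = (1/n:ℝ) * ∑ i, ∑ s, g (ω t) i * g (ω s) i := by
        intro t
        rw [← Finset.mul_sum]
        congr 1
        exact Finset.sum_comm
      rw [Finset.sum_congr rfl fun t _ => this t, ← Finset.mul_sum]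
      congr 1
      exact Finset.sum_comm
    rw [hQdef]
    simp only []
    rw [Finset.sum_congr rfl fun i _ => e1 i, Finset.sum_add_distrib,
      Finset.sum_sub_distrib, eA, eB, hnfdef]
    simp only [← Finset.mul_sum]
    ring
  -- expectation pieces
  have hEA : ∑ ω, w ω * (∑ t, A (ω t)) = (k:ℝ) * μA := by
    have h1 : ∀ ω, w ω * ∑ t, A (ω t) = ∑ t, w ω * A (ω t) := fun ω => Finset.mul_sum _ _ _
    rw [Finset.sum_congr rfl fun ω _ => h1 ω, Finset.sum_comm]
    have h2 : ∀ t : Fin k, ∑ ω : Fin k → Fin M, w ω * A (ω t) = μA := by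
      intro t
      simp only [hwdef]
      rw [maurey_exp_single p hp1 A t, hmuA]
    rw [Finset.sum_congr rfl fun t _ => h2 t, Finset.sum_const, Finset.card_univ,
      Fintype.card_fin]
    simp [nsmul_eq_mul]
  have hEB : ∑ ω, w ω * (∑ t, ∑ s, B (ω t) (ω s))
      = (k:ℝ) * D + ((k:ℝ) * ((k:ℝ) - 1)) * O := by
    have h1 : ∀ ω, w ω * ∑ t, ∑ s, B (ω t) (ω s) = ∑ t, ∑ s, w ω * B (ω t) (ω s) := by
      intro ω
      rw [Finset.mul_sum]
      exact Finset.sum_congr rfl fun t _ => Finset.mul_sum _ _ _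
    rw [Finset.sum_congr rfl fun ω _ => h1 ω, Finset.sum_comm]
    have key : ∀ t s : Fin k, ∑ ω : Fin k → Fin M, w ω * B (ω t) (ω s)
        = if t = s then D else O := by
      intro t s
      by_cases hts : t = s
      · subst hts
        rw [if_pos rfl]
        simp only [hwdef]
        rw [maurey_exp_single p hp1 (fun j => B j j) t, hDdef]
      · rw [if_neg hts]
        have h2 : ∀ ω : Fin k → Fin M, w ω * B (ω t) (ω s)
            = (1/n:ℝ) * ∑ i, w ω * (g (ω t) i * g (ω s) i) := by
          intro ω
          simp only [hBdef, Finset.mul_sum]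
          exact Finset.sum_congr rfl fun i _ => by ring
        rw [Finset.sum_congr rfl fun ω _ => h2 ω, ← Finset.mul_sum, Finset.sum_comm]
        have h3 : ∀ i, ∑ ω : Fin k → Fin M, w ω * (g (ω t) i * g (ω s) i)
            = u i * u i := by
          intro i
          simp only [hwdef]
          rw [maurey_exp_pair p hp1 (fun j => g j i) (fun j => g j i) t s hts, hudef]
        rw [Finset.sum_congr rfl fun i _ => h3 i, hOdef]
        congr 1
        exact Finset.sum_congr rfl fun i _ => (sq (u i)).symm ▸ by ring
    have key2 : ∀ t : Fin k, ∑ s : Fin k, ∑ ω : Fin k → Fin M, w ω * B (ω t) (ω s)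
        = D + ((k:ℝ) - 1) * O := by
      intro t
      rw [Finset.sum_congr rfl fun s _ => key t s]
      have : ∀ s : Fin k, (if t = s then D else O) = O + (if t = s then D - O else 0) := by
        intro s; by_cases h : t = s <;> simp [h]
      rw [Finset.sum_congr rfl fun s _ => this s, Finset.sum_add_distrib,
        Finset.sum_const, Finset.sum_ite_eq, Finset.card_univ, Fintype.card_fin]
      simp [nsmul_eq_mul]
      ring
    have hswap : ∀ t : Fin k, ∑ ω : Fin k → Fin M, ∑ s : Fin k, w ω * B (ω t) (ω s)
        = ∑ s : Fin k, ∑ ω : Fin k → Fin M, w ω * B (ω t) (ω s) := fun t => Finset.sum_comm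
    rw [Finset.sum_congr rfl fun t _ => hswap t]
    rw [Finset.sum_congr rfl fun t _ => key2 t, Finset.sum_const, Finset.card_univ,
      Fintype.card_fin]
    simp [nsmul_eq_mul]
    ring
  have hEQ : ∑ ω, w ω * Q ω
      = nf - 2*S*μA + (S^2/(k:ℝ)) * D + (S^2 * (((k:ℝ)-1)/(k:ℝ))) * O := by
    have h1 : ∀ ω, w ω * Q ω = nf * w ω - 2*(S/(k:ℝ)) * (w ω * ∑ t, A (ω t))
        + (S/(k:ℝ))^2 * (w ω * ∑ t, ∑ s, B (ω t) (ω s)) := by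
      intro ω; rw [hQd ω]; ring
    rw [Finset.sum_congr rfl fun ω _ => h1 ω, Finset.sum_add_distrib,
      Finset.sum_sub_distrib, ← Finset.mul_sum, ← Finset.mul_sum, ← Finset.mul_sum,
      hw1, hEA, hEB]
    field_simp
    ring
  -- identifications
  have hF1 : S * μA = (1/n : ℝ) * ∑ i, f i * fs i := by
    have h1 : ∀ i, f i * fs i = ∑ j, f i * ((S * p j) * g j i) := by
      intro i; rw [← hgkey i, Finset.mul_sum]
    rw [Finset.sum_congr rfl fun i _ => h1 i]
    simp only [hmuA, hAdef, Finset.mul_sum]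
    rw [Finset.sum_comm]
    exact Finset.sum_congr rfl fun j _ => Finset.sum_congr rfl fun i _ => by ring
  have hF2 : S^2 * O = (1/n : ℝ) * ∑ i, fs i ^ 2 := by
    have hu : ∀ i, S * u i = fs i := by
      intro i
      simp only [hudef]
      rw [Finset.mul_sum, ← hgkey i]
      exact Finset.sum_congr rfl fun j _ => by ring
    simp only [hOdef, Finset.mul_sum]
    refine Finset.sum_congr rfl fun i _ => ?_
    rw [← hu i]
    ring
  have hD1 : D ≤ 1 := by
    have hBjj : ∀ j, B j j ≤ 1 := by
      intro j
      have h1 : ∀ i : Fin n, g j i * g j i ≤ F j i ^ 2 := by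
        intro i
        simp only [hgdef]
        nlinarith [maurey_sign_sq_le (θs j), sq_nonneg (F j i)]
      calc B j j ≤ (1/n : ℝ) * ∑ i, F j i ^ 2 := by
            simp only [hBdef]
            refine mul_le_mul_of_nonneg_left (Finset.sum_le_sum fun i _ => h1 i) ?_
            positivity
        _ ≤ 1 := hF j
    rw [hDdef]
    calc ∑ j, p j * B j j ≤ ∑ j, p j * 1 :=
          Finset.sum_le_sum fun j _ => mul_le_mul_of_nonneg_left (hBjj j) (hp0 j)
      _ = 1 := by simp only [mul_one]; exact hp1
  have hO0 : 0 ≤ O := by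
    rw [hOdef]
    positivity
  have hQs : Qs = nf - 2 * ((1/n : ℝ) * ∑ i, f i * fs i) + (1/n :ℝ) * ∑ i, fs i ^ 2 := by
    have e1 : ∀ i, (f i - fs i)^2 = f i^2 - 2*(f i * fs i) + fs i^2 := fun i => by ring
    rw [hQsdef, Finset.sum_congr rfl fun i _ => e1 i, Finset.sum_add_distrib,
      Finset.sum_sub_distrib, hnfdef]
    have h2 : ∑ i, 2*(f i * fs i) = 2 * ∑ i, f i * fs i := (Finset.mul_sum _ _ _).symm
    rw [h2]
    ring
  have hbound : ∑ ω, w ω * Q ω ≤ Qs + S^2 / (k:ℝ) := by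
    have hd : (S^2/(k:ℝ)) * D ≤ S^2/(k:ℝ) := by
      have h0 : (0:ℝ) ≤ S^2/(k:ℝ) := by positivity
      exact mul_le_of_le_one_right h0 hD1
    have ho : (S^2 * (((k:ℝ)-1)/(k:ℝ))) * O ≤ S^2 * O := by
      refine mul_le_mul_of_nonneg_right ?_ hO0
      have h1 : ((k:ℝ)-1)/(k:ℝ) ≤ 1 := by
        rw [div_le_one hk0]; linarith
      calc S^2 * (((k:ℝ)-1)/(k:ℝ)) ≤ S^2 * 1 :=
            mul_le_mul_of_nonneg_left h1 (sq_nonneg S)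
        _ = S^2 := mul_one _
    linarith [hEQ, hd, ho, hF1, hF2, hQs]
  obtain ⟨ω₀, hw₀, hQ₀⟩ := maurey_exists_le_exp w Q hw0 hw1
  have hne : ∀ t, θs (ω₀ t) ≠ 0 := by
    intro t h0
    apply hw₀
    simp only [hwdef]
    apply Finset.prod_eq_zero (mem_univ t)
    simp [hpdef, h0]
  set N : Fin M → ℕ := fun j => (Finset.univ.filter fun t => ω₀ t = j).card with hNdef
  set θ : Fin M → ℝ := fun j => (S/(k:ℝ)) * (N j : ℝ) * Real.sign (θs j) with hθdef
  clear_value N θ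
  have hNsum : ∑ j, N j = k := by
    have h := Finset.card_eq_sum_card_fiberwise
      (f := ω₀) (s := univ) (t := univ) (fun x _ => mem_univ (ω₀ x))
    simp only [hNdef]
    rw [← h, Finset.card_univ, Fintype.card_fin]
  have habs : ∀ j, |θ j| = (S/(k:ℝ)) * (N j : ℝ) := by
    intro j
    simp only [hθdef]
    by_cases hNj : N j = 0
    · simp [hNj]
    · have hj : θs j ≠ 0 := by
        simp only [hNdef] at hNj
        obtain ⟨t, ht⟩ := Finset.card_pos.mp (Nat.pos_of_ne_zero hNj)
        have := (Finset.mem_filter.mp ht).2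
        exact this ▸ hne t
      have hnn : (0:ℝ) ≤ S/(k:ℝ) * (N j : ℝ) := by positivity
      rcases Real.sign_apply_eq_of_ne_zero (θs j) hj with h | h <;> rw [h] <;>
        simp [abs_of_nonneg hnn, mul_neg_one, abs_neg]
  have hC1 : ∑ j, |θ j| = S := by
    rw [Finset.sum_congr rfl fun j _ => habs j, ← Finset.mul_sum]
    have h1 : ∑ j, ((N j : ℕ):ℝ) = (k:ℝ) := by
      rw [← Nat.cast_sum, hNsum]
    rw [h1]
    field_simp
  have hC2 : (Finset.univ.filter fun j => θ j ≠ 0).card ≤ k := by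
    have hsub : (Finset.univ.filter fun j => θ j ≠ 0) ⊆ Finset.image ω₀ univ := by
      intro j hj
      rw [Finset.mem_filter] at hj
      have hNj : N j ≠ 0 := by
        intro h0
        exact hj.2 (by simp [hθdef, h0])
      simp only [hNdef] at hNj
      obtain ⟨t, ht⟩ := Finset.card_pos.mp (Nat.pos_of_ne_zero hNj)
      exact Finset.mem_image.mpr ⟨t, mem_univ _, (Finset.mem_filter.mp ht).2⟩
    calc (Finset.univ.filter fun j => θ j ≠ 0).card
        ≤ (Finset.image ω₀ univ).card := Finset.card_le_card hsub
      _ ≤ (univ : Finset (Fin k)).card := Finset.card_image_le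
      _ = k := by simp
  have hC3 : ∀ i, ∑ j, θ j * F j i = H ω₀ i := by
    intro i
    have h1 : ∑ t, g (ω₀ t) i = ∑ j, (N j : ℝ) * g j i := by
      rw [← Finset.sum_fiberwise_of_maps_to (fun t (_ : t ∈ univ) => mem_univ (ω₀ t))
        (fun t => g (ω₀ t) i)]
      refine Finset.sum_congr rfl fun j _ => ?_
      rw [Finset.sum_congr rfl (fun t ht => by rw [(Finset.mem_filter.mp ht).2]),
        Finset.sum_const]
      simp only [hNdef, nsmul_eq_mul]
    simp only [hHdef, hθdef]
    rw [h1, Finset.mul_sum]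
    exact Finset.sum_congr rfl fun j _ => by simp only [hgdef]; ring
  refine ⟨θ, hC1, hC2, ?_⟩
  have hgoal : (1 / n : ℝ) * ∑ i, (f i - ∑ j, θ j * F j i) ^ 2 = Q ω₀ := by
    rw [hQdef]; simp only []
    congr 1
    refine Finset.sum_congr rfl fun i _ => ?_
    rw [hC3 i]
  rw [hgoal]
  have : (1 / n : ℝ) * ∑ i, (f i - ∑ j, θs j * F j i) ^ 2 = Qs := by
    rw [hQsdef]
    simp only [hfsdef]
  linarith [hQ₀, hbound, this]

/-- Maurey argument: for a dictionary `F 1,...,F M` of empirical norm ≤ 1, any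
`θ* ≠ 0`, any `k ≥ 1` and any target `f`, there exists `θ` with `|θ|₁ = |θ*|₁`,
`M(θ) ≤ k` and `‖f - f_θ‖² ≤ ‖f - f_{θ*}‖² + |θ*|₁²/min(k, M(θ*))`. -/
theorem stmt_4 (n M : ℕ) (hn : 1 ≤ n) (hM : 1 ≤ M)
    (F : Fin M → Fin n → ℝ)
    (hF : ∀ j, (1 / n : ℝ) * ∑ i, F j i ^ 2 ≤ 1)
    (f : Fin n → ℝ) (θs : Fin M → ℝ) (hθs : θs ≠ 0) (k : ℕ) (hk : 1 ≤ k) :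
    ∃ θ : Fin M → ℝ,
      (∑ j, |θ j|) = (∑ j, |θs j|) ∧
      (Finset.univ.filter fun j => θ j ≠ 0).card ≤ k ∧
      (1 / n : ℝ) * ∑ i, (f i - ∑ j, θ j * F j i) ^ 2 ≤
        (1 / n : ℝ) * ∑ i, (f i - ∑ j, θs j * F j i) ^ 2 +
          (∑ j, |θs j|) ^ 2 /
            (min k ((Finset.univ.filter fun j => θs j ≠ 0).card) : ℕ) := by
  by_cases hkm : (Finset.univ.filter fun j => θs j ≠ 0).card ≤ k
  · refine ⟨θs, rfl, hkm, ?_⟩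
    exact le_add_of_nonneg_right (div_nonneg (sq_nonneg _) (Nat.cast_nonneg _))
  · push_neg at hkm
    obtain ⟨θ, h1, h2, h3⟩ := maurey_main hk F hF f θs hθs
    refine ⟨θ, h1, h2, ?_⟩
    have hmin : min k ((Finset.univ.filter fun j => θs j ≠ 0).card) = k := min_eq_left hkm.le
    rw [hmin]
    exact h3
end

section
/- Let M ≥ 2 and 1 ≤ k ≤ M be integers, and set k̄ = min(k, M - k). Then there exists a subset Ω of {ω ∈ {0,1}^M : ∑_j ω_j = k} such that (i) the Hamming distance ρ(ω, ω') = #{j : ω_j ≠ ω'_j} satisfies ρ(ω, ω') ≥ (k̄+1)/4 for all distinct ω, ω' ∈ Ω, and (ii) log(card(Ω)) ≥ C₁·k̄·log(1 + eM/k̄) with C₁ = 9·10⁻⁴. -/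
set_option maxHeartbeats 1000000

open Finset



def vgDist {n : ℕ} {α : Type*} [DecidableEq α] (x y : Fin n → α) : ℕ :=
  (univ.filter fun i => x i ≠ y i).card

lemma vgDist_comm {n : ℕ} {α : Type*} [DecidableEq α] (x y : Fin n → α) :
    vgDist x y = vgDist y x := by
  unfold vgDist; congr 1; ext i; simp [ne_comm]

lemma vgDist_self {n : ℕ} {α : Type*} [DecidableEq α] (x : Fin n → α) :
    vgDist x x = 0 := by simp [vgDist]

lemma vg_ball_bound {k : ℕ} {α : Type*} [DecidableEq α] [Fintype α] (c : Fin k → α)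
    {s : ℕ} (hs : s ≤ k) :
    (univ.filter fun x : Fin k → α => vgDist x c ≤ s).card
      ≤ k.choose s * (Fintype.card α) ^ s := by
  classical
  have hsub : (univ.filter fun x : Fin k → α => vgDist x c ≤ s)
      ⊆ (powersetCard s (univ : Finset (Fin k))).biUnion
        (fun S => univ.filter fun x : Fin k → α => ∀ j ∉ S, x j = c j) := by
    intro x hx
    simp only [mem_filter, mem_univ, true_and] at hx
    obtain ⟨S, hDS, hSu, hScard⟩ :=
      exists_subsuperset_card_eq (s := univ.filter fun i => x i ≠ c i)
        (t := (univ : Finset (Fin k))) (filter_subset _ _) hx (by simpa using hs)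
    rw [mem_biUnion]
    refine ⟨S, ?_, ?_⟩
    · rw [mem_powersetCard]; exact ⟨hSu, hScard⟩
    · simp only [mem_filter, mem_univ, true_and]
      intro j hj
      by_contra hne
      exact hj (hDS (by simp [hne]))
  have hcard : ∀ S ∈ powersetCard s (univ : Finset (Fin k)),
      (univ.filter fun x : Fin k → α => ∀ j ∉ S, x j = c j).card
        ≤ (Fintype.card α) ^ s := by
    intro S hS
    rw [mem_powersetCard] at hS
    have : (univ.filter fun x : Fin k → α => ∀ j ∉ S, x j = c j).card
        ≤ (univ : Finset ({j // j ∈ S} → α)).card := by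
      apply Finset.card_le_card_of_injOn (fun x => fun j : {j // j ∈ S} => x j.1)
      · intro x _; exact mem_univ _
      · intro x hx y hy hxy
        simp only [coe_filter, Set.mem_setOf_eq, mem_univ, true_and] at hx hy
        funext j
        by_cases hj : j ∈ S
        · exact congrFun hxy ⟨j, hj⟩
        · rw [hx j hj, hy j hj]
    apply this.trans
    rw [Finset.card_univ, Fintype.card_fun]
    rw [Fintype.card_coe, hS.2]
  calc (univ.filter fun x : Fin k → α => vgDist x c ≤ s).card
      ≤ _ := card_le_card hsub
    _ ≤ ∑ S ∈ powersetCard s (univ : Finset (Fin k)),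
          (univ.filter fun x : Fin k → α => ∀ j ∉ S, x j = c j).card :=
        card_biUnion_le
    _ ≤ ∑ S ∈ powersetCard s (univ : Finset (Fin k)), (Fintype.card α) ^ s :=
        Finset.sum_le_sum hcard
    _ = k.choose s * (Fintype.card α) ^ s := by
        rw [Finset.sum_const, card_powersetCard, card_univ, Fintype.card_fin, smul_eq_mul]

lemma vg_gilbert {k d : ℕ} (α : Type*) [DecidableEq α] [Fintype α] [Nonempty α]
    (hd : 1 ≤ d) (hsk : d - 1 ≤ k) :
    ∃ C : Finset (Fin k → α),
      (∀ x ∈ C, ∀ y ∈ C, x ≠ y → d ≤ vgDist x y) ∧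
      (Fintype.card α) ^ k ≤ C.card * (k.choose (d-1) * (Fintype.card α) ^ (d-1)) := by
  classical
  set F := (univ : Finset (Finset (Fin k → α))).filter
    (fun C => ∀ x ∈ C, ∀ y ∈ C, x ≠ y → d ≤ vgDist x y) with hF
  have hne : F.Nonempty := ⟨∅, by simp [hF]⟩
  obtain ⟨C, hCF, hmax⟩ := F.exists_max_image Finset.card hne
  rw [hF, mem_filter] at hCF
  have hgood := hCF.2
  refine ⟨C, hgood, ?_⟩
  have hcover : ∀ x : Fin k → α, ∃ c ∈ C, vgDist x c ≤ d - 1 := by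
    intro x
    by_contra hno
    push_neg at hno
    have hxC : x ∉ C := by
      intro hx
      have := hno x hx
      rw [vgDist_self] at this
      omega
    have hins : insert x C ∈ F := by
      rw [hF, mem_filter]
      refine ⟨mem_univ _, ?_⟩
      intro a ha b hb hab
      rw [mem_insert] at ha hb
      rcases ha with rfl | ha <;> rcases hb with rfl | hb
      · exact absurd rfl hab
      · have := hno b hb; omega
      · have := hno a ha; rw [vgDist_comm]; omega
      · exact hgood a ha b hb hab
    have := hmax _ hins
    rw [card_insert_of_notMem hxC] at this
    omega
  have hsub : (univ : Finset (Fin k → α)) ⊆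
      C.biUnion (fun c => univ.filter fun x => vgDist x c ≤ d - 1) := by
    intro x _
    rw [mem_biUnion]
    obtain ⟨c, hc, hdist⟩ := hcover x
    exact ⟨c, hc, by simp [hdist]⟩
  calc (Fintype.card α) ^ k = (univ : Finset (Fin k → α)).card := by
        rw [card_univ, Fintype.card_fun, Fintype.card_fin]
    _ ≤ _ := card_le_card hsub
    _ ≤ ∑ c ∈ C, (univ.filter fun x => vgDist x c ≤ d - 1).card := card_biUnion_le
    _ ≤ ∑ c ∈ C, k.choose (d-1) * (Fintype.card α) ^ (d-1) :=
        Finset.sum_le_sum fun c _ => vg_ball_bound c hsk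
    _ = C.card * (k.choose (d-1) * (Fintype.card α) ^ (d-1)) := by
        rw [Finset.sum_const, smul_eq_mul]


lemma vg_pow_self_le (s : ℕ) : (s : ℝ) ^ s ≤ Real.exp 1 ^ s * (s.factorial : ℝ) := by
  induction s with
  | zero => simp
  | succ n ih =>
    rcases Nat.eq_zero_or_pos n with h0 | hn
    · subst h0
      norm_num
    · have hn' : (0:ℝ) < n := by exact_mod_cast hn
      have key : ((n:ℝ) + 1) ^ n ≤ Real.exp 1 * (n:ℝ) ^ n := by
        have h1 : ((n:ℝ)+1)^n = ((1 + 1/n) * n)^n := by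
          field_simp
        rw [h1, mul_pow]
        have h2 : (1 + 1/(n:ℝ))^n ≤ Real.exp 1 := by
          have := Real.add_one_le_exp (1/(n:ℝ))
          calc (1 + 1/(n:ℝ))^n ≤ (Real.exp (1/n))^n := by
                apply pow_le_pow_left₀ (by positivity)
                linarith
            _ = Real.exp 1 := by
                rw [← Real.exp_nat_mul]
                congr 1
                field_simp
        exact mul_le_mul_of_nonneg_right h2 (by positivity)
      have : ((n:ℝ)+1)^(n+1) = ((n:ℝ)+1) * ((n:ℝ)+1)^n := by ring
      push_cast
      rw [this]
      calc ((n:ℝ)+1) * ((n:ℝ)+1)^n ≤ ((n:ℝ)+1) * (Real.exp 1 * (n:ℝ)^n) := by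
            apply mul_le_mul_of_nonneg_left key (by positivity)
        _ ≤ ((n:ℝ)+1) * (Real.exp 1 * (Real.exp 1 ^ n * n.factorial)) := by
            apply mul_le_mul_of_nonneg_left _ (by positivity)
            apply mul_le_mul_of_nonneg_left _ (Real.exp_pos 1).le
            exact_mod_cast ih
        _ = Real.exp 1 ^ (n+1) * (((n:ℝ)+1) * n.factorial) := by ring
        _ = Real.exp 1 ^ (n+1) * ((n+1).factorial : ℝ) := by
            rw [Nat.factorial_succ]; push_cast; ring

lemma vg_choose_le {k s : ℕ} (hs : 1 ≤ s) :
    (k.choose s : ℝ) ≤ (Real.exp 1 * k / s) ^ s := by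
  have h1 : (k.choose s : ℝ) ≤ (k:ℝ)^s / s.factorial := Nat.choose_le_pow_div s k
  have hs' : (0:ℝ) < s := by exact_mod_cast hs
  have hf : (0:ℝ) < s.factorial := by exact_mod_cast s.factorial_pos
  have h2 : (Real.exp 1 * k / s) ^ s = (Real.exp 1)^s * (k:ℝ)^s / (s:ℝ)^s := by
    rw [div_pow, mul_pow]
  rw [h2]
  apply h1.trans
  rw [div_le_div_iff₀ hf (by positivity)]
  calc (k:ℝ)^s * (s:ℝ)^s ≤ (k:ℝ)^s * (Real.exp 1 ^ s * s.factorial) := by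
        apply mul_le_mul_of_nonneg_left (vg_pow_self_le s) (by positivity)
    _ = Real.exp 1 ^ s * (k:ℝ)^s * s.factorial := by ring

lemma vg_mono {x y c : ℝ} (hx : 0 < x) (hxy : x ≤ y) (hc : Real.exp 1 * y ≤ c) :
    x * Real.log (c / x) ≤ y * Real.log (c / y) := by
  have hy : 0 < y := lt_of_lt_of_le hx hxy
  have hc0 : 0 < c := lt_of_lt_of_le (by positivity) hc
  have h1 : (1:ℝ) ≤ Real.log (c / y) := by
    have : Real.exp 1 ≤ c / y := by rw [le_div_iff₀ hy]; linarith
    calc (1:ℝ) = Real.log (Real.exp 1) := (Real.log_exp 1).symm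
      _ ≤ Real.log (c / y) := Real.log_le_log (Real.exp_pos 1) this
  have h2 : Real.log (c / x) = Real.log (c / y) + Real.log (y / x) := by
    rw [← Real.log_mul (by positivity) (by positivity)]
    congr 1
    field_simp
  have h3 : Real.log (y / x) ≤ y / x - 1 := Real.log_le_sub_one_of_pos (by positivity)
  have h4 : x * Real.log (y / x) ≤ y - x := by
    have := mul_le_mul_of_nonneg_left h3 hx.le
    calc x * Real.log (y/x) ≤ x * (y/x - 1) := this
      _ = y - x := by field_simp
  calc x * Real.log (c / x) = x * Real.log (c / y) + x * Real.log (y / x) := by rw [h2]; ring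
    _ ≤ x * Real.log (c / y) + (y - x) := by linarith
    _ ≤ x * Real.log (c / y) + (y - x) * Real.log (c / y) := by
        nlinarith [sub_nonneg.mpr hxy]
    _ = y * Real.log (c / y) := by ring

variable {M k b : ℕ}

def vgPos (hkbM : k * b ≤ M) (c : Fin k → Fin b) (i : Fin k) : Fin M :=
  ⟨(i : ℕ) * b + (c i : ℕ), by
    have h1 : (i : ℕ) * b + (c i : ℕ) < ((i : ℕ) + 1) * b := by
      have := (c i).isLt
      calc (i:ℕ) * b + (c i : ℕ) < (i:ℕ) * b + b := by omega
        _ = ((i:ℕ)+1) * b := by ring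
    have h2 : ((i : ℕ) + 1) * b ≤ k * b := Nat.mul_le_mul_right b i.isLt
    omega⟩

lemma vgPos_fst (hb : 0 < b) (hkbM : k * b ≤ M) (c : Fin k → Fin b) (i : Fin k) :
    ((vgPos hkbM c i : Fin M) : ℕ) / b = (i : ℕ) := by
  show ((i : ℕ) * b + (c i : ℕ)) / b = (i : ℕ)
  rw [mul_comm, Nat.mul_add_div hb, Nat.div_eq_of_lt (c i).isLt, add_zero]

lemma vgPos_eq_iff (hb : 0 < b) (hkbM : k * b ≤ M) (c c' : Fin k → Fin b) (i i' : Fin k) :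
    vgPos hkbM c i = vgPos hkbM c' i' ↔ i = i' ∧ c i = c' i' := by
  constructor
  · intro h
    have hval : (i : ℕ) * b + (c i : ℕ) = (i' : ℕ) * b + (c' i' : ℕ) :=
      congrArg Fin.val h
    have hi : (i : ℕ) = (i' : ℕ) := by
      have := vgPos_fst hb hkbM c i
      have h2 := vgPos_fst hb hkbM c' i'
      rw [show (vgPos hkbM c i : ℕ) = (i:ℕ)*b + (c i:ℕ) from rfl] at this
      rw [show (vgPos hkbM c' i' : ℕ) = (i':ℕ)*b + (c' i':ℕ) from rfl] at h2
      rw [← hval] at h2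
      omega
    have : (c i : ℕ) = (c' i' : ℕ) := by
      rw [hi] at hval; omega
    exact ⟨Fin.ext hi, Fin.ext this⟩
  · rintro ⟨rfl, h⟩
    unfold vgPos
    simp [h]

def vgEmb (hkbM : k * b ≤ M) (c : Fin k → Fin b) : Fin M → Bool :=
  fun j => decide (∃ i : Fin k, j = vgPos hkbM c i)

lemma vgEmb_filter (hkbM : k * b ≤ M) (c : Fin k → Fin b) :
    (univ.filter fun j => vgEmb hkbM c j = true) = univ.image (vgPos hkbM c) := by
  ext j
  simp [vgEmb, eq_comm]

lemma vgEmb_weight (hb : 0 < b) (hkbM : k * b ≤ M) (c : Fin k → Fin b) :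
    (univ.filter fun j => vgEmb hkbM c j = true).card = k := by
  rw [vgEmb_filter]
  rw [Finset.card_image_of_injective _ (fun i i' h => ((vgPos_eq_iff hb hkbM c c i i').1 h).1)]
  simp

lemma vgEmb_dist (hb : 0 < b) (hkbM : k * b ≤ M) (c c' : Fin k → Fin b) :
    2 * vgDist c c' ≤ (univ.filter fun j => vgEmb hkbM c j ≠ vgEmb hkbM c' j).card := by
  classical
  set D := (univ.filter fun i => c i ≠ c' i) with hD
  set A := D.image (vgPos hkbM c) with hA
  set B := D.image (vgPos hkbM c') with hB
  have hAcard : A.card = D.card :=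
    Finset.card_image_of_injective _ (fun i i' h => ((vgPos_eq_iff hb hkbM c c i i').1 h).1)
  have hBcard : B.card = D.card :=
    Finset.card_image_of_injective _ (fun i i' h => ((vgPos_eq_iff hb hkbM c' c' i i').1 h).1)
  have hdisj : Disjoint A B := by
    rw [Finset.disjoint_left]
    intro j hjA hjB
    rw [hA, mem_image] at hjA
    rw [hB, mem_image] at hjB
    obtain ⟨i, hi, rfl⟩ := hjA
    obtain ⟨i', hi', heq⟩ := hjB
    obtain ⟨rfl, hc⟩ := (vgPos_eq_iff hb hkbM c' c i' i).1 heq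
    rw [hD, mem_filter] at hi
    exact hi.2 hc.symm
  have hAsub : A ⊆ univ.filter fun j => vgEmb hkbM c j ≠ vgEmb hkbM c' j := by
    intro j hj
    rw [hA, mem_image] at hj
    obtain ⟨i, hi, rfl⟩ := hj
    rw [hD, mem_filter] at hi
    rw [mem_filter]
    refine ⟨mem_univ _, ?_⟩
    have h1 : vgEmb hkbM c (vgPos hkbM c i) = true := by
      simp only [vgEmb, decide_eq_true_iff]
      exact ⟨i, rfl⟩
    have h2 : vgEmb hkbM c' (vgPos hkbM c i) = false := by
      simp only [vgEmb, decide_eq_false_iff_not]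
      rintro ⟨i', heq⟩
      obtain ⟨rfl, hc⟩ := (vgPos_eq_iff hb hkbM c c' i i').1 heq
      exact hi.2 hc
    rw [h1, h2]; simp
  have hBsub : B ⊆ univ.filter fun j => vgEmb hkbM c j ≠ vgEmb hkbM c' j := by
    intro j hj
    rw [hB, mem_image] at hj
    obtain ⟨i, hi, rfl⟩ := hj
    rw [hD, mem_filter] at hi
    rw [mem_filter]
    refine ⟨mem_univ _, ?_⟩
    have h1 : vgEmb hkbM c' (vgPos hkbM c' i) = true := by
      simp only [vgEmb, decide_eq_true_iff]
      exact ⟨i, rfl⟩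
    have h2 : vgEmb hkbM c (vgPos hkbM c' i) = false := by
      simp only [vgEmb, decide_eq_false_iff_not]
      rintro ⟨i', heq⟩
      obtain ⟨rfl, hc⟩ := (vgPos_eq_iff hb hkbM c' c i i').1 heq
      exact hi.2 hc.symm
    rw [h1, h2]; simp
  calc 2 * vgDist c c' = A.card + B.card := by
        rw [hAcard, hBcard]; unfold vgDist; rw [hD]; ring
    _ = (A ∪ B).card := (Finset.card_union_of_disjoint hdisj).symm
    _ ≤ _ := Finset.card_le_card (Finset.union_subset hAsub hBsub)

lemma vg_M_le_choose {M k : ℕ} (hk1 : 1 ≤ k) (hk : k ≤ M / 2) : M ≤ M.choose k := by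
  induction k with
  | zero => omega
  | succ n ih =>
    rcases Nat.eq_zero_or_pos n with rfl | hn
    · simp
    · have hstep : M.choose n ≤ M.choose (n + 1) :=
        Nat.choose_le_succ_of_lt_half_left (by omega)
      exact le_trans (ih hn (by omega)) hstep

lemma vg_two_le_dist {M k : ℕ} (ω ω' : Fin M → Bool)
    (hw : (univ.filter fun j => ω j = true).card = k)
    (hw' : (univ.filter fun j => ω' j = true).card = k) (hne : ω ≠ ω') :
    2 ≤ (univ.filter fun j => ω j ≠ ω' j).card := by
  classical
  set T := univ.filter fun j => ω j = true with hT
  set T' := univ.filter fun j => ω' j = true with hT'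
  have hTT' : T ≠ T' := by
    intro h
    apply hne
    funext j
    have : j ∈ T ↔ j ∈ T' := by rw [h]
    simp only [hT, hT', mem_filter, mem_univ, true_and] at this
    cases hj : ω j <;> cases hj' : ω' j <;> simp [hj, hj'] at this ⊢
  have hA : (T \ T').Nonempty := by
    rw [Finset.sdiff_nonempty]
    intro hsub
    exact hTT' (Finset.eq_of_subset_of_card_le hsub (by omega))
  have hB : (T' \ T).Nonempty := by
    rw [Finset.sdiff_nonempty]
    intro hsub
    exact hTT' (Finset.eq_of_subset_of_card_le hsub (by omega)).symm
  obtain ⟨a, ha⟩ := hA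
  obtain ⟨c, hc⟩ := hB
  rw [mem_sdiff] at ha hc
  have hac : a ≠ c := by
    intro h; subst h; exact ha.2 hc.1
  have hsub : ({a, c} : Finset (Fin M)) ⊆ univ.filter fun j => ω j ≠ ω' j := by
    intro x hx
    rw [mem_insert, mem_singleton] at hx
    rw [mem_filter]
    refine ⟨mem_univ _, ?_⟩
    rcases hx with rfl | rfl
    · have h1 : ω x = true := by have := ha.1; simp [hT] at this; exact this
      have h2 : ω' x ≠ true := by have := ha.2; simp [hT'] at this; simp [this]
      intro heq; exact h2 (heq ▸ h1)
    · have h1 : ω' x = true := by have := hc.1; simp [hT'] at this; exact this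
      have h2 : ω x ≠ true := by have := hc.2; simp [hT] at this; simp [this]
      intro heq; exact h2 (heq.symm ▸ h1)
  calc 2 = ({a, c} : Finset (Fin M)).card := (Finset.card_pair hac).symm
    _ ≤ _ := Finset.card_le_card hsub

lemma vg_weight_card (M k : ℕ) :
    (univ.filter (fun ω : Fin M → Bool => (univ.filter fun j => ω j = true).card = k)).card
      = M.choose k := by
  classical
  have : (univ.filter (fun ω : Fin M → Bool => (univ.filter fun j => ω j = true).card = k)).card
      = (powersetCard k (univ : Finset (Fin M))).card := by
    have hi : ∀ (ω : Fin M → Bool)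
        (_ : ω ∈ univ.filter (fun ω : Fin M → Bool => (univ.filter fun j => ω j = true).card = k)),
        (univ.filter fun j => ω j = true) ∈ powersetCard k (univ : Finset (Fin M)) := by
      intro ω hω
      rw [mem_powersetCard]
      refine ⟨filter_subset _ _, ?_⟩
      rw [mem_filter] at hω
      exact hω.2
    have hj : ∀ (S : Finset (Fin M)) (_ : S ∈ powersetCard k (univ : Finset (Fin M))),
        (fun j => decide (j ∈ S)) ∈
          univ.filter (fun ω : Fin M → Bool => (univ.filter fun j => ω j = true).card = k) := by
      intro S hS
      rw [mem_powersetCard] at hS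
      rw [mem_filter]
      refine ⟨mem_univ _, ?_⟩
      have : (univ.filter fun j => decide (j ∈ S) = true) = S := by
        ext j; simp
      rw [this]; exact hS.2
    exact Finset.card_bij' (fun ω _ => univ.filter fun j => ω j = true)
      (fun S _ => fun j => decide (j ∈ S)) hi hj
      (by
        intro ω hω
        funext j
        simp only [mem_filter, mem_univ, true_and]
        cases hjj : ω j <;> simp [hjj])
      (by
        intro S hS
        ext j; simp)
  rw [this, card_powersetCard, card_univ, Fintype.card_fin]

lemma vg_main (M k : ℕ) (hM : 2 ≤ M) (hk1 : 1 ≤ k) (hkM : 2 * k ≤ M) :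
    ∃ Ω : Finset (Fin M → Bool),
      (∀ ω ∈ Ω, (univ.filter fun j => ω j = true).card = k) ∧
      (∀ ω ∈ Ω, ∀ ω' ∈ Ω, ω ≠ ω' →
        ((k : ℝ) + 1) / 4 ≤ ((univ.filter fun j => ω j ≠ ω' j).card : ℝ)) ∧
      (9 / 10 ^ 4 : ℝ) * k * Real.log (1 + Real.exp 1 * M / k) ≤ Real.log Ω.card := by
  classical
  have hM1 : (1:ℝ) ≤ M := by exact_mod_cast Nat.one_le_iff_ne_zero.mpr (by omega)
  have hk0 : (0:ℝ) < k := by exact_mod_cast hk1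
  have hexp : Real.exp 1 < 2.7182818286 := Real.exp_one_lt_d9
  have hexp0 : (0:ℝ) < Real.exp 1 := Real.exp_pos 1
  have harg : (1:ℝ) ≤ 1 + Real.exp 1 * M / k := by
    have : 0 ≤ Real.exp 1 * M / k := by positivity
    linarith
  by_cases hk7 : k ≤ 7
  · -- small k: take all weight-k vectors
    refine ⟨univ.filter (fun ω : Fin M → Bool => (univ.filter fun j => ω j = true).card = k),
      ?_, ?_, ?_⟩
    · intro ω hω; rw [mem_filter] at hω; exact hω.2
    · intro ω hω ω' hω' hne
      rw [mem_filter] at hω hω'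
      have h2 := vg_two_le_dist ω ω' hω.2 hω'.2 hne
      have : (2:ℝ) ≤ ((univ.filter fun j => ω j ≠ ω' j).card : ℝ) := by exact_mod_cast h2
      have hk7' : (k:ℝ) ≤ 7 := by exact_mod_cast hk7
      linarith
    · rw [vg_weight_card]
      have hMchoose : M ≤ M.choose k := vg_M_le_choose hk1 (by omega)
      have hlogM : Real.log M ≤ Real.log (M.choose k) :=
        Real.log_le_log (by linarith) (by exact_mod_cast hMchoose)
      have hb1 : (1:ℝ) + Real.exp 1 * M / k ≤ (M:ℝ)^(3:ℕ) := by
        have hk1R : (1:ℝ) ≤ k := by exact_mod_cast hk1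
        have h1 : Real.exp 1 * M / k ≤ Real.exp 1 * M := by
          rw [div_le_iff₀ hk0]
          nlinarith [mul_nonneg hexp0.le (by linarith : (0:ℝ) ≤ (M:ℝ))]
        have hM2 : (2:ℝ) ≤ M := by exact_mod_cast hM
        have h4 : (4:ℝ) * M ≤ (M:ℝ)^(3:ℕ) := by
          have h2 : (0:ℝ) ≤ (M:ℝ) * ((M:ℝ)^2 - 4) := mul_nonneg (by linarith) (by nlinarith)
          nlinarith [h2]
        have h5 : (1:ℝ) + Real.exp 1 * M ≤ 4 * M := by nlinarith
        linarith
      have hlog1 : Real.log (1 + Real.exp 1 * M / k) ≤ 3 * Real.log M := by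
        calc Real.log (1 + Real.exp 1 * M / k) ≤ Real.log ((M:ℝ)^(3:ℕ)) :=
              Real.log_le_log (by linarith) hb1
          _ = 3 * Real.log M := by rw [Real.log_pow]; norm_num
      have hlog0 : 0 ≤ Real.log (1 + Real.exp 1 * M / k) := Real.log_nonneg harg
      have hlogM0 : 0 ≤ Real.log M := Real.log_nonneg hM1
      have hk7' : (k:ℝ) ≤ 7 := by exact_mod_cast hk7
      calc (9 / 10 ^ 4 : ℝ) * k * Real.log (1 + Real.exp 1 * M / k)
          ≤ (9 / 10 ^ 4 : ℝ) * 7 * (3 * Real.log M) := by nlinarith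
        _ ≤ Real.log M := by nlinarith
        _ ≤ _ := hlogM
  · -- large k: block construction
    push_neg at hk7
    have hk8 : 8 ≤ k := hk7
    set b := M / k with hbdef
    have hb2 : 2 ≤ b := by
      rw [hbdef]
      exact Nat.le_div_iff_mul_le (by omega) |>.mpr (by omega)
    have hb0 : 0 < b := by omega
    have hkbM : k * b ≤ M := by
      rw [hbdef, mul_comm]
      exact Nat.div_mul_le_self M k
    set s := k / 8 with hsdef
    have hs1 : 1 ≤ s := by rw [hsdef]; omega
    have hs8 : s * 8 ≤ k := by rw [hsdef]; exact Nat.div_mul_le_self k 8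
    have hsk : s ≤ k := by omega
    set d := s + 1 with hddef
    -- Gilbert bound
    haveI : Nonempty (Fin b) := ⟨⟨0, hb0⟩⟩
    obtain ⟨C, hCdist, hCcard⟩ := vg_gilbert (k := k) (d := d) (Fin b)
      (by omega) (by simp [hddef]; omega)
    rw [Fintype.card_fin] at hCcard
    have hds : d - 1 = s := by omega
    rw [hds] at hCcard
    refine ⟨C.image (vgEmb hkbM), ?_, ?_, ?_⟩
    · intro ω hω
      rw [mem_image] at hω
      obtain ⟨c, _, rfl⟩ := hω
      exact vgEmb_weight hb0 hkbM c
    · intro ω hω ω' hω' hne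
      rw [mem_image] at hω hω'
      obtain ⟨c, hc, rfl⟩ := hω
      obtain ⟨c', hc', rfl⟩ := hω'
      have hcc' : c ≠ c' := by rintro rfl; exact hne rfl
      have hd1 : s + 1 ≤ vgDist c c' := hCdist c hc c' hc' hcc'
      have hd2 := vgEmb_dist hb0 hkbM c c'
      have h2d : 2 * (s + 1) ≤ (univ.filter fun j => vgEmb hkbM c j ≠ vgEmb hkbM c' j).card := by
        omega
      have hcast : 2 * ((s:ℝ) + 1) ≤
          ((univ.filter fun j => vgEmb hkbM c j ≠ vgEmb hkbM c' j).card : ℝ) := by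
        exact_mod_cast h2d
      have hsdnat : k < s * 8 + 8 := Nat.lt_div_mul_add (by omega)
      have hsd : (k:ℝ) ≤ 8 * (s:ℝ) + 7 := by exact_mod_cast Nat.lt_succ_iff.mp (by omega)
      linarith
    · -- cardinality bound
      have hΦinj : Set.InjOn (vgEmb hkbM) C := by
        intro c hc c' hc' heq
        by_contra hcc'
        have hd1 := hCdist c hc c' hc' hcc'
        have hd2 := vgEmb_dist hb0 hkbM c c'
        have : (univ.filter fun j => vgEmb hkbM c j ≠ vgEmb hkbM c' j).card = 0 := by
          rw [heq]
          simp
        omega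
      rw [Finset.card_image_of_injOn hΦinj]
      -- real versions
      have hC0 : 0 < C.card := by
        rcases Nat.eq_zero_or_pos C.card with h | h
        · rw [h] at hCcard
          have : 0 < b ^ k := Nat.pow_pos hb0
          omega
        · exact h
      have hbR : (2:ℝ) ≤ (b:ℝ) := by exact_mod_cast hb2
      have hsR : (1:ℝ) ≤ (s:ℝ) := by exact_mod_cast hs1
      have hkR : (8:ℝ) ≤ (k:ℝ) := by exact_mod_cast hk8
      have hs_le : (s:ℝ) ≤ (k:ℝ) / 8 := by
        have : (s:ℝ) * 8 ≤ (k:ℝ) := by exact_mod_cast hs8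
        linarith
      have hchoose_pos : 0 < k.choose s := Nat.choose_pos hsk
      -- log of gilbert inequality
      have hgilb : (b:ℝ) ^ k ≤ (C.card : ℝ) * ((k.choose s : ℝ) * (b:ℝ) ^ s) := by
        exact_mod_cast hCcard
      have hlog1 : (k:ℝ) * Real.log b ≤
          Real.log C.card + Real.log (k.choose s) + (s:ℝ) * Real.log b := by
        have hl := Real.log_le_log (by positivity) hgilb
        rw [Real.log_pow] at hl
        rw [Real.log_mul (by positivity) (by positivity), Real.log_mul (by positivity) (by positivity),
          Real.log_pow] at hl
        push_cast at hl ⊢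
        linarith
      have hlogch : Real.log (k.choose s) ≤ (s:ℝ) * Real.log (Real.exp 1 * k / s) := by
        calc Real.log (k.choose s) ≤ Real.log ((Real.exp 1 * k / s) ^ s) :=
              Real.log_le_log (by exact_mod_cast hchoose_pos) (vg_choose_le hs1)
          _ = (s:ℝ) * Real.log (Real.exp 1 * k / s) := by rw [Real.log_pow]
      have hmono : (s:ℝ) * Real.log (Real.exp 1 * k / s) ≤
          ((k:ℝ)/7) * Real.log (Real.exp 1 * k / ((k:ℝ)/7)) := by
        apply vg_mono (by linarith) (by linarith)
        nlinarith
      have h7e : Real.exp 1 * k / ((k:ℝ)/7) = 7 * Real.exp 1 := by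
        field_simp
      have hlog7e : Real.log (7 * Real.exp 1) = Real.log 7 + 1 := by
        rw [Real.log_mul (by norm_num) (by positivity), Real.log_exp]
      have hlogb : Real.log 2 ≤ Real.log b := Real.log_le_log (by norm_num) hbR
      have hlogb0 : 0 < Real.log b := lt_of_lt_of_le (Real.log_pos (by norm_num)) hlogb
      -- bound on target's log
      have hargle : (1:ℝ) + Real.exp 1 * M / k ≤ 2 * Real.exp 1 * b := by
        have hMlt : (M:ℝ) ≤ (k:ℝ) * ((b:ℝ) + 1) := by
          have h : M < M / k * k + k := Nat.lt_div_mul_add (show 0 < k by omega)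
          have h' : (M:ℝ) < (M/k : ℕ) * (k:ℝ) + k := by exact_mod_cast h
          have hbk : ((M/k : ℕ) : ℝ) = (b:ℝ) := by rw [hbdef]
          rw [hbk] at h'
          nlinarith
        have h1 : Real.exp 1 * M / k ≤ Real.exp 1 * ((b:ℝ) + 1) := by
          rw [div_le_iff₀ hk0]
          calc Real.exp 1 * M ≤ Real.exp 1 * ((k:ℝ) * ((b:ℝ)+1)) := by
                apply mul_le_mul_of_nonneg_left hMlt hexp0.le
            _ = Real.exp 1 * ((b:ℝ) + 1) * k := by ring
        have he2 : (2:ℝ) ≤ Real.exp 1 := by nlinarith [Real.add_one_le_exp 1]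
        have heb : Real.exp 1 * 2 ≤ Real.exp 1 * b := mul_le_mul_of_nonneg_left hbR hexp0.le
        nlinarith [h1, he2, heb]
      have hlogarg : Real.log (1 + Real.exp 1 * M / k) ≤ Real.log 2 + 1 + Real.log b := by
        calc Real.log (1 + Real.exp 1 * M / k) ≤ Real.log (2 * Real.exp 1 * b) :=
              Real.log_le_log (by linarith) hargle
          _ = Real.log 2 + 1 + Real.log b := by
              rw [Real.log_mul (by positivity) (by positivity),
                Real.log_mul (by norm_num) (by positivity), Real.log_exp]
      -- assemble
      have hm2 : (s:ℝ) * Real.log (Real.exp 1 * k / s) ≤ ((k:ℝ)/7) * (Real.log 7 + 1) := by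
        rw [h7e, hlog7e] at hmono
        exact hmono
      have hmain : ((k:ℝ) - s) * Real.log b - ((k:ℝ)/7) * (Real.log 7 + 1) ≤ Real.log C.card := by
        nlinarith [hlog1, hlogch, hm2]
      have hlog7 : Real.log 7 ≤ 3 * Real.log 2 := by
        calc Real.log 7 ≤ Real.log 8 := Real.log_le_log (by norm_num) (by norm_num)
          _ = 3 * Real.log 2 := by
            rw [show (8:ℝ) = 2^(3:ℕ) by norm_num, Real.log_pow]
            norm_num
      have hlog2lb : 0.6931471803 < Real.log 2 := Real.log_two_gt_d9
      have hlog2ub : Real.log 2 < 0.6931471808 := Real.log_two_lt_d9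
      have hscalar : (9 / 10 ^ 4 : ℝ) * (Real.log 2 + 1 + Real.log b) ≤
          (6/7) * Real.log b - (1/7) * (Real.log 7 + 1) := by
        have hl7 : Real.log 7 ≤ 3 * 0.6931471808 := by linarith
        linarith [hlogb]
      calc (9 / 10 ^ 4 : ℝ) * k * Real.log (1 + Real.exp 1 * M / k)
          ≤ (9 / 10 ^ 4 : ℝ) * k * (Real.log 2 + 1 + Real.log b) := by
            apply mul_le_mul_of_nonneg_left hlogarg (by positivity)
        _ = (k:ℝ) * ((9 / 10 ^ 4 : ℝ) * (Real.log 2 + 1 + Real.log b)) := by ring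
        _ ≤ (k:ℝ) * ((6/7) * Real.log b - (1/7) * (Real.log 7 + 1)) :=
            mul_le_mul_of_nonneg_left hscalar (le_of_lt hk0)
        _ ≤ ((k:ℝ) - s) * Real.log b - ((k:ℝ)/7) * (Real.log 7 + 1) := by
            nlinarith [mul_nonneg (show (0:ℝ) ≤ (k:ℝ)/7 - s by linarith) (le_of_lt hlogb0)]
        _ ≤ Real.log C.card := hmain

/-- Generalized Varshamov–Gilbert lemma: for `M ≥ 2`, `1 ≤ k ≤ M` and
`k̄ = min(k, M-k)`, there is a set `Ω` of binary vectors with exactly `k` ones,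
pairwise Hamming distance at least `(k̄+1)/4`, and
`log card(Ω) ≥ C₁ k̄ log(1+eM/k̄)` with `C₁ = 9·10⁻⁴`. -/
theorem stmt_9 (M k : ℕ) (hM : 2 ≤ M) (hk1 : 1 ≤ k) (hkM : k ≤ M) :
    ∃ Ω : Finset (Fin M → Bool),
      (∀ ω ∈ Ω, (Finset.univ.filter fun j => ω j = true).card = k) ∧
      (∀ ω ∈ Ω, ∀ ω' ∈ Ω, ω ≠ ω' →
        ((min k (M - k) : ℕ) + 1 : ℝ) / 4 ≤
          (Finset.univ.filter fun j => ω j ≠ ω' j).card) ∧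
      (9 / 10 ^ 4 : ℝ) * (min k (M - k) : ℕ) *
          Real.log (1 + Real.exp 1 * M / (min k (M - k) : ℕ)) ≤
        Real.log Ω.card := by
  classical
  rcases le_or_gt (2 * k) M with h2k | h2k
  · have hmin : min k (M - k) = k := min_eq_left (by omega)
    obtain ⟨Ω, hw, hd, hc⟩ := vg_main M k hM hk1 h2k
    rw [hmin]
    exact ⟨Ω, hw, hd, hc⟩
  · rcases Nat.eq_zero_or_pos (M - k) with hMk0 | hMk0
    · -- k = M : take the all-ones vector
      have hkM' : k = M := by omega
      refine ⟨{fun _ => true}, ?_, ?_, ?_⟩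
      · intro ω hω
        rw [Finset.mem_singleton] at hω
        subst hω
        simp [hkM']
      · intro ω hω ω' hω' hne
        rw [Finset.mem_singleton] at hω hω'
        exact absurd (hω.trans hω'.symm) hne
      · have hmin : min k (M - k) = 0 := by omega
        rw [hmin]
        simp
    · -- complement case: M - k < k
      set k' := M - k with hk'def
      have h1 : 1 ≤ k' := hMk0
      have h2 : 2 * k' ≤ M := by omega
      have hmin : min k (M - k) = k' := by
        rw [← hk'def]; exact min_eq_right (by omega)
      obtain ⟨Ω, hw, hd, hc⟩ := vg_main M k' hM h1 h2
      have hinj : Function.Injective (fun ω : Fin M → Bool => fun j => !(ω j)) := by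
        intro a b h
        funext j
        have := congrFun h j
        simpa using this
      refine ⟨Ω.image (fun ω => fun j => !(ω j)), ?_, ?_, ?_⟩
      · intro ω hω
        rw [Finset.mem_image] at hω
        obtain ⟨ν, hν, rfl⟩ := hω
        have hset : (univ.filter fun j => (!(ν j)) = true) = univ \ (univ.filter fun j => ν j = true) := by
          rw [← Finset.filter_not]
          apply Finset.filter_congr
          intro j _
          cases hj : ν j <;> simp [hj]
        rw [hset, Finset.card_sdiff_of_subset (Finset.filter_subset _ _), hw ν hν, Finset.card_univ,
          Fintype.card_fin]
        omega
      · intro ω hω ω' hω' hne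
        rw [Finset.mem_image] at hω hω'
        obtain ⟨ν, hν, rfl⟩ := hω
        obtain ⟨ν', hν', rfl⟩ := hω'
        have hνν' : ν ≠ ν' := by rintro rfl; exact hne rfl
        have hset : (univ.filter fun j => (!(ν j)) ≠ (!(ν' j))) = univ.filter fun j => ν j ≠ ν' j := by
          apply Finset.filter_congr
          intro j _
          cases hj : ν j <;> cases hj' : ν' j <;> simp [hj, hj']
        rw [hmin, hset]
        exact hd ν hν ν' hν' hνν'
      · rw [hmin, Finset.card_image_of_injective _ hinj]
        exact hc
end

section
/- Define, for θ ∈ ℝⁿ, ψ*_n(θ) = min( M(θ)·log n / n, |θ|₁·√(log n / n), |θ|₁² ) + 1/n and ψ^{01}_n(θ) = 2 log n · ( 1/n + ∑_{i=1}^n min(θ_i², 1/n) ). Fix constants 0 < a < b < ∞ and let Θ_n = {θ ∈ ℝⁿ : a/√n ≤ |θ_j| ≤ b/√n for all j with θ_j ≠ 0}. Then sup_{θ ∈ Θ_n} ψ*_n(θ)/ψ^{01}_n(θ) → 0 as n → ∞. -/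
open Finset

/-- With `ψ*_n(θ) = min(M(θ)log n/n, |θ|₁√(log n/n), |θ|₁²) + 1/n` and
`ψ⁰¹_n(θ) = 2 log n (1/n + ∑ᵢ min(θᵢ², 1/n))`, for fixed `0 < a < b`,
`sup_{θ ∈ Θ_n} ψ*_n(θ)/ψ⁰¹_n(θ) → 0` where
`Θ_n = {θ : a/√n ≤ |θ_j| ≤ b/√n for all j with θ_j ≠ 0}`. -/
theorem stmt_11 (a b : ℝ) (ha : 0 < a) (hab : a < b) :
    ∀ ε : ℝ, 0 < ε → ∃ N : ℕ, ∀ n : ℕ, N ≤ n → ∀ θ : Fin n → ℝ,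
      (∀ j, θ j ≠ 0 → a / Real.sqrt n ≤ |θ j| ∧ |θ j| ≤ b / Real.sqrt n) →
      (min (((Finset.univ.filter fun j => θ j ≠ 0).card : ℝ) * Real.log n / n)
          (min ((∑ j, |θ j|) * Real.sqrt (Real.log n / n)) ((∑ j, |θ j|) ^ 2))
        + 1 / n) /
        (2 * Real.log n * (1 / n + ∑ i, min ((θ i) ^ 2) (1 / n))) ≤ ε := by
  intro ε hε
  have hb : 0 < b := ha.trans hab
  set c : ℝ := min (a ^ 2) 1 with hcdef
  clear_value c
  have hc0 : 0 < c := by rw [hcdef]; exact lt_min (pow_pos ha 2) one_pos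
  have hca : c ≤ a ^ 2 := by rw [hcdef]; exact min_le_left _ _
  have hc1 : c ≤ 1 := by rw [hcdef]; exact min_le_right _ _
  set K : ℝ := b / c + 1 with hKdef
  clear_value K
  have hK1 : 1 ≤ K := by
    have : 0 < b / c := div_pos hb hc0
    linarith
  set C : ℝ := max 1 ((K / ε) ^ 2) with hCdef
  clear_value C
  refine ⟨⌈Real.exp C⌉₊, ?_⟩
  intro n hn θ hθ
  have hnC : Real.exp C ≤ (n : ℝ) := le_trans (Nat.le_ceil _) (by exact_mod_cast hn)
  have hn0 : (0 : ℝ) < n := lt_of_lt_of_le (Real.exp_pos C) hnC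
  set L : ℝ := Real.log (n : ℝ) with hLdef
  clear_value L
  have hLC : C ≤ L := by rw [hLdef]; exact (Real.le_log_iff_exp_le hn0).mpr hnC
  have hL1 : 1 ≤ L := le_trans (by rw [hCdef]; exact le_max_left _ _) hLC
  have hL0 : 0 ≤ L := le_trans zero_le_one hL1
  set s : ℝ := Real.sqrt L with hsdef
  clear_value s
  have hs0 : 0 ≤ s := by rw [hsdef]; exact Real.sqrt_nonneg _
  have hs1 : (1 : ℝ) ≤ s := by
    rw [hsdef, show (1 : ℝ) = Real.sqrt 1 by simp [Real.sqrt_one]]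
    exact Real.sqrt_le_sqrt hL1
  have hLs : L = s ^ 2 := by rw [hsdef]; exact (Real.sq_sqrt hL0).symm
  have hsK : K / ε ≤ s := by
    have h1 : K / ε = Real.sqrt ((K / ε) ^ 2) :=
      (Real.sqrt_sq (by positivity)).symm
    rw [h1, hsdef]
    exact Real.sqrt_le_sqrt (le_trans (le_trans (by rw [hCdef]; exact le_max_right _ _) hLC) le_rfl)
  have hεs : K ≤ ε * s := by
    have := (div_le_iff₀ hε).mp hsK
    linarith
  have e2 : (1 : ℝ) ≤ ε * s := le_trans hK1 hεs
  have hbc : b ≤ c * (ε * s) := by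
    have h1 : b / c ≤ ε * s := by linarith
    calc b = (b / c) * c := by field_simp
      _ ≤ (ε * s) * c := mul_le_mul_of_nonneg_right h1 hc0.le
      _ = c * (ε * s) := by ring
  -- abbreviations
  set S : Finset (Fin n) := Finset.univ.filter fun j => θ j ≠ 0 with hSdef
  set M : ℝ := (S.card : ℝ) with hMdef
  clear_value M
  have hM0 : 0 ≤ M := by rw [hMdef]; exact Nat.cast_nonneg _
  have hsqrtn : Real.sqrt n * Real.sqrt n = (n : ℝ) := Real.mul_self_sqrt hn0.le
  have hsqrtn0 : 0 < Real.sqrt n := Real.sqrt_pos.mpr hn0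
  -- numerator bound
  have hsum_eq : ∑ j, |θ j| = ∑ j ∈ S, |θ j| :=
    (Finset.sum_filter_of_ne (fun j _ h => abs_ne_zero.mp h)).symm
  have hsum_le : ∑ j, |θ j| ≤ M * (b / Real.sqrt n) := by
    rw [hsum_eq]
    calc ∑ j ∈ S, |θ j| ≤ S.card • (b / Real.sqrt n) :=
          Finset.sum_le_card_nsmul _ _ _ (fun j hj => (hθ j (Finset.mem_filter.mp hj).2).2)
      _ = M * (b / Real.sqrt n) := by rw [nsmul_eq_mul, hMdef]
  have hsqrtLn : Real.sqrt (L / n) = s / Real.sqrt n := by rw [hsdef]; exact Real.sqrt_div hL0 n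
  have hnum_mid : (∑ j, |θ j|) * Real.sqrt (L / n) ≤ M * b * s / n := by
    calc (∑ j, |θ j|) * Real.sqrt (L / n)
        ≤ (M * (b / Real.sqrt n)) * Real.sqrt (L / n) :=
          mul_le_mul_of_nonneg_right hsum_le (Real.sqrt_nonneg _)
      _ = (M * b * s) / (Real.sqrt n * Real.sqrt n) := by
          rw [hsqrtLn]; ring
      _ = M * b * s / n := by rw [hsqrtn]
  have hnum_le : min (M * L / n)
      (min ((∑ j, |θ j|) * Real.sqrt (L / n)) ((∑ j, |θ j|) ^ 2)) + 1 / n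
      ≤ M * b * s / n + 1 / n := by
    have h1 : min (M * L / n)
        (min ((∑ j, |θ j|) * Real.sqrt (L / n)) ((∑ j, |θ j|) ^ 2))
        ≤ (∑ j, |θ j|) * Real.sqrt (L / n) :=
      le_trans (min_le_right _ _) (min_le_left _ _)
    linarith [le_trans h1 hnum_mid]
  -- denominator bound
  have hden_low : M * (c / n) ≤ ∑ i, min ((θ i) ^ 2) (1 / n) := by
    have hterm : ∀ i ∈ S, c / n ≤ min ((θ i) ^ 2) (1 / n) := by
      intro i hi
      have hi' : θ i ≠ 0 := (Finset.mem_filter.mp hi).2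
      have habs : a / Real.sqrt n ≤ |θ i| := (hθ i hi').1
      have hsq : a ^ 2 / n ≤ (θ i) ^ 2 := by
        have h2 : (a / Real.sqrt n) ^ 2 ≤ |θ i| ^ 2 := by
          apply pow_le_pow_left₀ (by positivity) habs 2
        rw [div_pow, sq_abs] at h2
        have : Real.sqrt n ^ 2 = (n : ℝ) := by rw [sq, hsqrtn]
        rwa [this] at h2
      refine le_min (le_trans ?_ hsq) ?_
      · gcongr
      · gcongr
    calc M * (c / n) = S.card • (c / n) := by rw [nsmul_eq_mul, hMdef]
      _ ≤ ∑ i ∈ S, min ((θ i) ^ 2) (1 / n) := Finset.card_nsmul_le_sum _ _ _ hterm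
      _ ≤ ∑ i, min ((θ i) ^ 2) (1 / n) := by
          apply Finset.sum_le_sum_of_subset_of_nonneg (Finset.filter_subset _ _)
          intro i _ _
          exact le_min (sq_nonneg _) (by positivity)
  have hDenL0 : 0 < 2 * L * (1 / n + M * (c / n)) := by
    have h1 : 0 < (1 : ℝ) / n + M * (c / n) := by positivity
    have h2 : (0 : ℝ) < 2 * L := by linarith
    exact mul_pos h2 h1
  have hDen_ge : 2 * L * (1 / n + M * (c / n)) ≤ 2 * L * (1 / n + ∑ i, min ((θ i) ^ 2) (1 / n)) := by
    apply mul_le_mul_of_nonneg_left (by linarith) (by linarith)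
  have hNumU0 : 0 ≤ M * b * s / n + 1 / n := by positivity
  have main : (min (M * L / n)
      (min ((∑ j, |θ j|) * Real.sqrt (L / n)) ((∑ j, |θ j|) ^ 2)) + 1 / n) /
      (2 * L * (1 / n + ∑ i, min ((θ i) ^ 2) (1 / n)))
      ≤ (M * b * s / n + 1 / n) / (2 * L * (1 / n + M * (c / n))) :=
    div_le_div₀ hNumU0 hnum_le hDenL0 hDen_ge
  refine le_trans main ?_
  have hD2 : (0 : ℝ) < 2 * L * (1 + M * c) := by
    have h1 : (0 : ℝ) ≤ M * c := mul_nonneg hM0 hc0.le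
    have h2 : (0 : ℝ) < 1 + M * c := by linarith
    have h3 : (0 : ℝ) < 2 * L := by linarith
    exact mul_pos h3 h2
  have heq : (M * b * s / n + 1 / n) / (2 * L * (1 / n + M * (c / n)))
      = (M * b * s + 1) / (2 * L * (1 + M * c)) := by
    rw [div_eq_div_iff hDenL0.ne' hD2.ne']
    field_simp
    try ring
  rw [heq, div_le_iff₀ hD2]
  -- final algebra: M*b*s + 1 ≤ ε * (2 * s^2 * (1 + M*c))
  rw [hLs]
  have e1 : M * b * s ≤ (ε * s ^ 2) * (M * c) := by
    calc M * b * s = M * s * b := by ring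
      _ ≤ M * s * (c * (ε * s)) := mul_le_mul_of_nonneg_left hbc (mul_nonneg hM0 hs0)
      _ = (ε * s ^ 2) * (M * c) := by ring
  have e2' : (1 : ℝ) ≤ ε * s ^ 2 := by
    have h1 : (1 : ℝ) * 1 ≤ (ε * s) * s := mul_le_mul e2 hs1 zero_le_one (mul_nonneg hε.le hs0)
    calc (1 : ℝ) = 1 * 1 := by ring
      _ ≤ (ε * s) * s := h1
      _ = ε * s ^ 2 := by ring
  have e3 : (0 : ℝ) ≤ (ε * s ^ 2) * (M * c) :=
    mul_nonneg (mul_nonneg hε.le (sq_nonneg s)) (mul_nonneg hM0 hc0.le)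
  linarith [e1, e2', e3]
end

section
/- Let X be an n×M matrix with columns of empirical norm at most 1 (i.e., (1/n)∑_i X_{ij}² ≤ 1 for each j), let f ∈ ℝⁿ and Y = f + ξ. Let λ > 0 and let θ̂ minimize (1/n)|Y - Xθ|₂² + λ|θ|₁ over ℝ^M. On the event A = { |(2/n)Xᵀξ|_∞ ≤ λ }, one has for every θ ∈ ℝ^M: (1/n)|Xθ̂ - f|₂² ≤ (1/n)|Xθ - f|₂² + 2λ|θ|₁. -/
open Finset

/-- Deterministic oracle inequality for the Lasso: if `θ̂` minimizes
`(1/n)|Y-Xθ|₂² + λ|θ|₁` with `Y = f + ξ`, then on the event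
`|(2/n)Xᵀξ|_∞ ≤ λ`, for every `θ`,
`(1/n)|Xθ̂-f|₂² ≤ (1/n)|Xθ-f|₂² + 2λ|θ|₁`. -/
theorem stmt_12 (n M : ℕ) (hn : 1 ≤ n) (X : Matrix (Fin n) (Fin M) ℝ)
    (hX : ∀ j, (1 / n : ℝ) * ∑ i, X i j ^ 2 ≤ 1)
    (f ξ Y : Fin n → ℝ) (hY : Y = f + ξ)
    (lam : ℝ) (hlam : 0 < lam) (θhat : Fin M → ℝ)
    (hmin : ∀ θ : Fin M → ℝ,
      (1 / n : ℝ) * ∑ i, (Y i - X.mulVec θhat i) ^ 2 + lam * ∑ j, |θhat j| ≤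
        (1 / n : ℝ) * ∑ i, (Y i - X.mulVec θ i) ^ 2 + lam * ∑ j, |θ j|)
    (hA : ∀ j, |(2 / n : ℝ) * ∑ i, X i j * ξ i| ≤ lam) :
    ∀ θ : Fin M → ℝ,
      (1 / n : ℝ) * ∑ i, (X.mulVec θhat i - f i) ^ 2 ≤
        (1 / n : ℝ) * ∑ i, (X.mulVec θ i - f i) ^ 2 + 2 * lam * ∑ j, |θ j| := by
  intro θ
  have hn0 : (0 : ℝ) < n := by exact_mod_cast hn
  -- expansion of the squared residual
  have expand : ∀ v : Fin M → ℝ,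
      (1 / n : ℝ) * ∑ i, (Y i - X.mulVec v i) ^ 2 =
        (1 / n : ℝ) * ∑ i, (X.mulVec v i - f i) ^ 2
          - 2 * ((1 / n : ℝ) * ∑ i, (X.mulVec v i - f i) * ξ i)
          + (1 / n : ℝ) * ∑ i, ξ i ^ 2 := by
    intro v
    have : ∑ i, (Y i - X.mulVec v i) ^ 2 =
        ∑ i, (X.mulVec v i - f i) ^ 2
          - 2 * ∑ i, (X.mulVec v i - f i) * ξ i + ∑ i, ξ i ^ 2 := by
      simp only [hY, Pi.add_apply, Finset.mul_sum, ← Finset.sum_sub_distrib,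
        ← Finset.sum_add_distrib]
      exact Finset.sum_congr rfl fun i _ => by ring
    rw [this]; ring
  -- the cross term rewritten column-wise
  have swap : ∀ v : Fin M → ℝ,
      ∑ i, X.mulVec v i * ξ i = ∑ j, v j * ∑ i, X i j * ξ i := by
    intro v
    simp only [Matrix.mulVec, dotProduct, Finset.sum_mul, Finset.mul_sum]
    rw [Finset.sum_comm]
    exact Finset.sum_congr rfl fun j _ => Finset.sum_congr rfl fun i _ => by ring
  have swap2 : ∑ i, (X.mulVec θhat i - f i) * ξ i - ∑ i, (X.mulVec θ i - f i) * ξ i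
      = ∑ j, (θhat j - θ j) * ∑ i, X i j * ξ i := by
    have e1 : ∑ i, (X.mulVec θhat i - f i) * ξ i - ∑ i, (X.mulVec θ i - f i) * ξ i
        = ∑ i, X.mulVec θhat i * ξ i - ∑ i, X.mulVec θ i * ξ i := by
      rw [← Finset.sum_sub_distrib, ← Finset.sum_sub_distrib]
      exact Finset.sum_congr rfl fun i _ => by ring
    rw [e1, swap θhat, swap θ, ← Finset.sum_sub_distrib]
    exact Finset.sum_congr rfl fun j _ => by ring
  -- bound the cross term
  have cross : (2 / n : ℝ) * ∑ j, (θhat j - θ j) * ∑ i, X i j * ξ i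
      ≤ lam * ∑ j, |θhat j| + lam * ∑ j, |θ j| := by
    have : (2 / n : ℝ) * ∑ j, (θhat j - θ j) * ∑ i, X i j * ξ i
        ≤ lam * ∑ j, (|θhat j| + |θ j|) := by
      rw [Finset.mul_sum, Finset.mul_sum]
      apply Finset.sum_le_sum
      intro j _
      calc (2 / n : ℝ) * ((θhat j - θ j) * ∑ i, X i j * ξ i)
          = (θhat j - θ j) * ((2 / n : ℝ) * ∑ i, X i j * ξ i) := by ring
        _ ≤ |(θhat j - θ j) * ((2 / n : ℝ) * ∑ i, X i j * ξ i)| := le_abs_self _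
        _ = |θhat j - θ j| * |(2 / n : ℝ) * ∑ i, X i j * ξ i| := abs_mul _ _
        _ ≤ (|θhat j| + |θ j|) * lam :=
            mul_le_mul (abs_sub _ _) (hA j) (abs_nonneg _) (by positivity)
        _ = lam * (|θhat j| + |θ j|) := mul_comm _ _
    rw [Finset.sum_add_distrib, mul_add] at this
    exact this
  have h := hmin θ
  rw [expand θhat, expand θ] at h
  have h2 : 2 * ((1 / n : ℝ) * ∑ i, (X.mulVec θhat i - f i) * ξ i)
        - 2 * ((1 / n : ℝ) * ∑ i, (X.mulVec θ i - f i) * ξ i)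
      ≤ lam * ∑ j, |θhat j| + lam * ∑ j, |θ j| := by
    have e : 2 * ((1 / n : ℝ) * ∑ i, (X.mulVec θhat i - f i) * ξ i)
          - 2 * ((1 / n : ℝ) * ∑ i, (X.mulVec θ i - f i) * ξ i)
        = (2 / n : ℝ) * (∑ i, (X.mulVec θhat i - f i) * ξ i
            - ∑ i, (X.mulVec θ i - f i) * ξ i) := by ring
    rw [e, swap2]
    exact cross
  linarith
end

section
/- Let (Θ, d) be as follows: Θ = ℝ^M, and for a probability measure π on the finite set P = {0,1}^M and estimators θ̂_p ∈ ℝ^M indexed by p ∈ P, with Y_i = η(x_i) + ξ_i, ξ_i i.i.d. N(0,σ²), define the exponentially weighted aggregate θ̃ = ∑_p θ̂_p w_p / ∑_p w_p with weights w_p = exp(-(1/(4σ²))∑_i (Y_i - f_{θ̂_p}(x_i))² - |p|/2)·π_p. Suppose (Leung–Barron inequality) E‖f_{θ̃} - η‖² ≤ min_{p : π_p ≠ 0} { E‖f_{θ̂_p} - η‖² + (4σ²/n)log(π_p⁻¹) }, and suppose each least squares estimator satisfies E‖f_{θ̂_p} - η‖² ≤ min_{θ ∈ ℝ^p}‖f_θ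 - η‖² + σ²(|p| ∧ R)/n, and the prior satisfies (4σ²/n)log(π_p⁻¹) ≤ (8σ²|p|/n)log(1 + eM/(|p|∨1)) + (8σ²/n)log2 for |p| < R, and π assigns mass 1/2 to p = (1,...,1). Then E‖f_{θ̃} - η‖² ≤ min_{θ ∈ ℝ^M}{ ‖f_θ - η‖² + min( σ²R/n, 9σ²M(θ)/n · log(1 + eM/(M(θ)∨1)) ) } + (8σ²/n)log2. -/
open Finset

/-- Theorem 1 of the paper (conditional form): if the aggregate risk `ES`
satisfies the Leung–Barron inequality with prior `π`, each least squares risk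
`LS p` satisfies the Pythagorean bound, the prior remainder satisfies the
Exponential Screening bound for `|p| < R`, and `π` puts mass `1/2` (in
particular nonzero mass) on the all-ones pattern, then
`ES ≤ min_θ {‖f_θ-η‖² + min(σ²R/n, 9σ²M(θ)/n·log(1+eM/(M(θ)∨1)))} + (8σ²/n)log 2`. -/
theorem stmt_18 (n M : ℕ) (hn : 1 ≤ n) (hM : 1 ≤ M)
    (F : Fin M → Fin n → ℝ) (η : Fin n → ℝ) (σ : ℝ) (hσ : 0 < σ)
    (R : ℕ) (hR : R = (Matrix.of fun i j => F j i : Matrix (Fin n) (Fin M) ℝ).rank)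
    (ES : ℝ) (LS : (Fin M → Bool) → ℝ) (π : (Fin M → Bool) → ℝ)
    -- Leung–Barron oracle inequality
    (h1 : ∀ p : Fin M → Bool, π p ≠ 0 →
      ES ≤ LS p + 4 * σ ^ 2 / n * Real.log (π p)⁻¹)
    -- risk bound for each least squares estimator
    (h2 : ∀ p : Fin M → Bool, ∀ θ : Fin M → ℝ, (∀ j, p j = false → θ j = 0) →
      LS p ≤ (1 / n : ℝ) * ∑ i, ((∑ j, θ j * F j i) - η i) ^ 2 +
        σ ^ 2 * (min ((Finset.univ.filter fun j => p j = true).card) R : ℕ) / n)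
    -- prior remainder bound for small patterns
    (h3 : ∀ p : Fin M → Bool, (Finset.univ.filter fun j => p j = true).card < R →
      4 * σ ^ 2 / n * Real.log (π p)⁻¹ ≤
        8 * σ ^ 2 * ((Finset.univ.filter fun j => p j = true).card : ℝ) / n *
            Real.log (1 + Real.exp 1 * M /
              (max ((Finset.univ.filter fun j => p j = true).card : ℝ) 1)) +
          8 * σ ^ 2 / n * Real.log 2)
    -- nonvanishing prior on small patterns and mass 1/2 on the full pattern
    (h5 : ∀ p : Fin M → Bool,
      (Finset.univ.filter fun j => p j = true).card < R → π p ≠ 0)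
    (h4 : π (fun _ => true) = 1 / 2) :
    ES ≤ (⨅ θ : Fin M → ℝ,
        (1 / n : ℝ) * ∑ i, ((∑ j, θ j * F j i) - η i) ^ 2 +
          min (σ ^ 2 * R / n)
            (9 * σ ^ 2 * ((Finset.univ.filter fun j => θ j ≠ 0).card : ℝ) / n *
              Real.log (1 + Real.exp 1 * M /
                (max ((Finset.univ.filter fun j => θ j ≠ 0).card : ℝ) 1)))) +
      8 * σ ^ 2 / n * Real.log 2 := by
  have hn0 : (0:ℝ) < n := by exact_mod_cast hn
  have hM0 : (0:ℝ) < M := by exact_mod_cast hM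
  have hlog2 : (0:ℝ) ≤ Real.log 2 := Real.log_nonneg (by norm_num)
  have hRM : R ≤ M := by
    rw [hR]
    exact (Matrix.rank_le_card_width _).trans (by simp)
  -- log lower bound: for any s ≤ M, L := log (1 + e*M/max s 1) ≥ 1
  have hL1 : ∀ s : ℕ, s ≤ M →
      1 ≤ Real.log (1 + Real.exp 1 * M / (max (s:ℝ) 1)) := by
    intro s hs
    have hmax1 : (1:ℝ) ≤ max (s:ℝ) 1 := le_max_right _ _
    have hmax0 : (0:ℝ) < max (s:ℝ) 1 := lt_of_lt_of_le one_pos hmax1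
    have hmaxM : max (s:ℝ) 1 ≤ M := by
      refine max_le ?_ (by exact_mod_cast hM)
      exact_mod_cast hs
    have hexp : Real.exp 1 ≤ Real.exp 1 * M / max (s:ℝ) 1 := by
      rw [le_div_iff₀ hmax0]
      have := Real.exp_pos 1
      nlinarith
    have hpos : (0:ℝ) < 1 + Real.exp 1 * M / max (s:ℝ) 1 := by
      have := Real.exp_pos 1
      nlinarith
    rw [Real.le_log_iff_exp_le hpos]
    linarith
  -- Bound 1 : via the full pattern
  have bound1 : ∀ θ : Fin M → ℝ, ES ≤
      (1 / n : ℝ) * ∑ i, ((∑ j, θ j * F j i) - η i) ^ 2 + σ ^ 2 * R / n +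
        8 * σ ^ 2 / n * Real.log 2 := by
    intro θ
    have hπ : π (fun _ => true) ≠ 0 := by rw [h4]; norm_num
    have e1 := h1 (fun _ => true) hπ
    have e2 := h2 (fun _ => true) θ (by intro j hj; simp at hj)
    have hcard : (Finset.univ.filter fun j : Fin M => (true : Bool) = true).card = M := by
      simp
    rw [hcard, Nat.min_eq_right hRM] at e2
    have hlog : Real.log (π (fun _ => true))⁻¹ = Real.log 2 := by
      rw [h4]; norm_num
    rw [hlog] at e1
    have h48 : 4 * σ ^ 2 / n * Real.log 2 ≤ 8 * σ ^ 2 / n * Real.log 2 := by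
      have h0 : 0 ≤ σ ^ 2 / (n:ℝ) := by positivity
      have hprodnn := mul_nonneg h0 hlog2
      have e1 : 4 * σ ^ 2 / (n:ℝ) * Real.log 2 = 4 * (σ ^ 2 / n * Real.log 2) := by ring
      have e2 : 8 * σ ^ 2 / (n:ℝ) * Real.log 2 = 8 * (σ ^ 2 / n * Real.log 2) := by ring
      rw [e1, e2]; linarith
    linarith
  -- Bound 2 : via the support pattern
  have bound2 : ∀ θ : Fin M → ℝ, ES ≤
      (1 / n : ℝ) * ∑ i, ((∑ j, θ j * F j i) - η i) ^ 2 +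
        9 * σ ^ 2 * ((Finset.univ.filter fun j => θ j ≠ 0).card : ℝ) / n *
          Real.log (1 + Real.exp 1 * M /
            (max ((Finset.univ.filter fun j => θ j ≠ 0).card : ℝ) 1)) +
        8 * σ ^ 2 / n * Real.log 2 := by
    intro θ
    set s := (Finset.univ.filter fun j => θ j ≠ 0).card with hs
    have hsM : s ≤ M := by
      have := Finset.card_filter_le (Finset.univ : Finset (Fin M)) (fun j => θ j ≠ 0)
      simpa using this
    have hL := hL1 s hsM
    set L := Real.log (1 + Real.exp 1 * M / (max (s:ℝ) 1)) with hLdef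
    by_cases hsR : s < R
    · -- use support pattern
      set p : Fin M → Bool := fun j => decide (θ j ≠ 0) with hp
      have hcard : (Finset.univ.filter fun j => p j = true).card = s := by
        rw [hs]
        congr 1
        apply Finset.filter_congr
        intro j _
        simp [hp]
      have hπ : π p ≠ 0 := h5 p (by rw [hcard]; exact hsR)
      have e1 := h1 p hπ
      have e2 := h2 p θ (by
        intro j hj
        rw [hp] at hj
        simpa using of_decide_eq_false hj)
      have e3 := h3 p (by rw [hcard]; exact hsR)
      rw [hcard] at e2 e3
      rw [Nat.min_eq_left (le_of_lt hsR)] at e2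
      rw [← hLdef] at e3
      have key : σ ^ 2 * (s:ℝ) / n + 8 * σ ^ 2 * (s:ℝ) / n * L ≤
          9 * σ ^ 2 * (s:ℝ) / n * L := by
        have hσn : 0 ≤ σ ^ 2 * (s:ℝ) / n := by positivity
        have hAL := mul_le_mul_of_nonneg_left hL hσn
        have e1 : 8 * σ ^ 2 * (s:ℝ) / n * L = 8 * (σ ^ 2 * (s:ℝ) / n * L) := by ring
        have e2 : 9 * σ ^ 2 * (s:ℝ) / n * L = 9 * (σ ^ 2 * (s:ℝ) / n * L) := by ring
        rw [e1, e2]; linarith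
      push_cast at e2
      linarith
    · -- s ≥ R : the 9-term dominates σ²R/n, use bound1
      push_neg at hsR
      have hRs : (R:ℝ) ≤ s := by exact_mod_cast hsR
      have key : σ ^ 2 * R / n ≤ 9 * σ ^ 2 * (s:ℝ) / n * L := by
        have hA0 : (0:ℝ) ≤ σ ^ 2 * (s:ℝ) / n := by positivity
        have hBA : σ ^ 2 * (R:ℝ) / n ≤ σ ^ 2 * (s:ℝ) / n := by gcongr
        have hAL := mul_le_mul_of_nonneg_left hL hA0
        have hALnn : (0:ℝ) ≤ σ ^ 2 * (s:ℝ) / n * L := by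
          calc (0:ℝ) ≤ σ ^ 2 * (s:ℝ) / n * 1 := by linarith
          _ ≤ _ := hAL
        have e2 : 9 * σ ^ 2 * (s:ℝ) / n * L = 9 * (σ ^ 2 * (s:ℝ) / n * L) := by ring
        rw [e2]; linarith
      linarith [bound1 θ, key]
  -- combine
  have hb : ∀ θ : Fin M → ℝ,
      ES - 8 * σ ^ 2 / n * Real.log 2 ≤
      (1 / n : ℝ) * ∑ i, ((∑ j, θ j * F j i) - η i) ^ 2 +
          min (σ ^ 2 * R / n)
            (9 * σ ^ 2 * ((Finset.univ.filter fun j => θ j ≠ 0).card : ℝ) / n *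
              Real.log (1 + Real.exp 1 * M /
                (max ((Finset.univ.filter fun j => θ j ≠ 0).card : ℝ) 1))) := by
    intro θ
    rcases le_total (σ ^ 2 * R / n)
      (9 * σ ^ 2 * ((Finset.univ.filter fun j => θ j ≠ 0).card : ℝ) / n *
        Real.log (1 + Real.exp 1 * M /
          (max ((Finset.univ.filter fun j => θ j ≠ 0).card : ℝ) 1))) with h | h
    · rw [min_eq_left h]; linarith [bound1 θ]
    · rw [min_eq_right h]; linarith [bound2 θ]
  have := le_ciInf hb
  linarith
end
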